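/- For every integer d ≥ 3, the abelianization Γ_d/Γ_d' of the Fabrykowski–Gupta group Γ_d is isomorphic to ℤ_d × ℤ_d (the direct product of two cyclic groups of order d). -/

import Mathlib

namespace FG

variable (d : ℕ) [NeZero d]

/-- The rooted-tree automorphism `a` of the `d`-regular rooted tree (vertex set: the free
monoid `{0,…,d-1}^*`), acting by `(x w)^a = ((x+1) mod d) w`. -/
def aFun : List (Fin d) → List (Fin d)
  | [] => []
  | x :: w => (x + 1) :: w

def aInv : List (Fin d) → List (Fin d)
  | [] => []
  | x :: w => (x - 1) :: w

lemma aInv_aFun : ∀ w, aInv d (aFun d w) = w := by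
  intro w; cases w <;> simp [aFun, aInv]

lemma aFun_aInv : ∀ w, aFun d (aInv d w) = w := by
  intro w; cases w <;> simp [aFun, aInv]

def aPerm : Equiv.Perm (List (Fin d)) :=
  ⟨aFun d, aInv d, aInv_aFun d, aFun_aInv d⟩

/-- The rooted-tree automorphism `r`:
`(0 w)^r = 0 w^a`, `(x w)^r = x w` for `1 ≤ x ≤ d-2`, `((d-1) w)^r = (d-1) w^r`. -/
def rFun : List (Fin d) → List (Fin d)
  | [] => []
  | x :: w => if x = 0 then x :: aFun d w else if x = -1 then x :: rFun w else x :: w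

def rInv : List (Fin d) → List (Fin d)
  | [] => []
  | x :: w => if x = 0 then x :: aInv d w else if x = -1 then x :: rInv w else x :: w

lemma rInv_rFun : ∀ w, rInv d (rFun d w) = w := by
  intro w
  induction w with
  | nil => simp [rFun, rInv]
  | cons x w ih =>
    by_cases h0 : x = 0
    · simp [rFun, rInv, h0, aInv_aFun]
    · by_cases h1 : x = -1
      · subst h1
        have hd : ¬ d = 1 := by simpa using h0
        simp [rFun, rInv, hd, ih]
      · simp [rFun, rInv, h0, h1]

lemma rFun_rInv : ∀ w, rFun d (rInv d w) = w := by
  intro w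
  induction w with
  | nil => simp [rFun, rInv]
  | cons x w ih =>
    by_cases h0 : x = 0
    · simp [rFun, rInv, h0, aFun_aInv]
    · by_cases h1 : x = -1
      · subst h1
        have hd : ¬ d = 1 := by simpa using h0
        simp [rFun, rInv, hd, ih]
      · simp [rFun, rInv, h0, h1]

def rPerm : Equiv.Perm (List (Fin d)) :=
  ⟨rFun d, rInv d, rInv_rFun d, rFun_rInv d⟩

/-- The Fabrykowski–Gupta group `Γ_d`, as the subgroup of the permutation group of the
free monoid `{0,…,d-1}^*` generated by the tree automorphisms `a` and `r`. -/
def Gamma : Subgroup (Equiv.Perm (List (Fin d))) :=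
  Subgroup.closure {aPerm d, rPerm d}

/-- The generator `a` as an element of `Γ_d`. -/
def aG : ↥(Gamma d) :=
  ⟨aPerm d, Subgroup.subset_closure (Set.mem_insert _ _)⟩

/-- The generator `r` as an element of `Γ_d`. -/
def rG : ↥(Gamma d) :=
  ⟨rPerm d, Subgroup.subset_closure (Set.mem_insert_iff.mpr (Or.inr rfl))⟩

/-- The `n`-th level stabilizer `Stab_{Γ_d}(n)`: all elements of `Γ_d` fixing every word
of length `n`. -/
def Stab (n : ℕ) : Subgroup ↥(Gamma d) where
  carrier := { g | ∀ w : List (Fin d), w.length = n → (g : Equiv.Perm (List (Fin d))) w = w }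
  one_mem' := by intro w _; rfl
  mul_mem' := by
    intro g h hg hh w hw
    have : ((g * h : ↥(Gamma d)) : Equiv.Perm (List (Fin d))) w
        = (g : Equiv.Perm (List (Fin d))) ((h : Equiv.Perm (List (Fin d))) w) := rfl
    rw [this, hh w hw, hg w hw]
  inv_mem' := by
    intro g hg w hw
    have h1 := hg w hw
    calc ((g⁻¹ : ↥(Gamma d)) : Equiv.Perm (List (Fin d))) w
        = (g : Equiv.Perm (List (Fin d)))⁻¹ ((g : Equiv.Perm (List (Fin d))) w) := by
          rw [h1]; rfl
      _ = w := Equiv.symm_apply_apply _ _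

/-- The conjugate `g_i = r^{a^i} = a^{-i} r a^i` in `Γ_d`. -/
def gG (i : ℕ) : ↥(Gamma d) := (aG d ^ i)⁻¹ * rG d * aG d ^ i

end FG

namespace FGX
open FG
open Fin.NatCast

variable (d : ℕ) [NeZero d]

/-- The embedding `Fin d → ZMod d`. -/
def em : Fin d →+ ZMod d where
  toFun x := (x.val : ZMod d)
  map_zero' := by simp
  map_add' x y := by
    show ((x + y).val : ZMod d) = (x.val : ZMod d) + (y.val : ZMod d)
    rw [Fin.val_add, ZMod.natCast_mod, Nat.cast_add]

lemma em_natCast (n : ℕ) : em d ((n : ℕ) : Fin d) = (n : ZMod d) := by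
  simp [em, Fin.val_natCast, ZMod.natCast_mod]

lemma em_one : em d 1 = 1 := by
  have := em_natCast d 1
  simpa using this

/-- The "root translation" invariant. -/
def cEval (g : Equiv.Perm (List (Fin d))) : ZMod d :=
  em d ((g [0, 0]).headD 0)

/-- The "total second-level translation" invariant. -/
def sEval (g : Equiv.Perm (List (Fin d))) : ZMod d :=
  ∑ x : Fin d, em d ((g [x, 0]).tail.headD 0)

/-- The structural property satisfied by all elements of `Γ_d`. -/
def SpecW (g : Equiv.Perm (List (Fin d))) (c : Fin d) (f : Fin d → Fin d) : Prop :=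
  g [] = [] ∧ (∀ x : Fin d, g [x] = [x + c]) ∧
    (∀ (x y : Fin d) (w : List (Fin d)), ∃ w', g (x :: y :: w) = (x + c) :: (y + f x) :: w')

def Spec (g : Equiv.Perm (List (Fin d))) : Prop := ∃ c f, SpecW d g c f

lemma rFun_cons (x : Fin d) (w : List (Fin d)) :
    rFun d (x :: w) =
      if x = 0 then x :: aFun d w else if x = -1 then x :: rFun d w else x :: w := rfl

variable {d}

lemma cEval_specW {g c f} (h : SpecW d g c f) : cEval d g = em d c := by
  obtain ⟨w', hw⟩ := h.2.2 0 0 []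
  simp [cEval, hw]

lemma sEval_specW {g c f} (h : SpecW d g c f) : sEval d g = ∑ x : Fin d, em d (f x) := by
  unfold sEval
  refine Finset.sum_congr rfl fun x _ => ?_
  obtain ⟨w', hw⟩ := h.2.2 x 0 []
  simp [hw]

lemma specW_one : SpecW d 1 0 0 := by
  refine ⟨rfl, fun x => by simp, fun x y w => ⟨w, by simp⟩⟩

lemma specW_mul {g h c f c' f'} (hg : SpecW d g c f) (hh : SpecW d h c' f') :
    SpecW d (g * h) (c' + c) (fun x => f' x + f (x + c')) := by
  obtain ⟨hg0, hg1, hg2⟩ := hg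
  obtain ⟨hh0, hh1, hh2⟩ := hh
  refine ⟨?_, fun x => ?_, fun x y w => ?_⟩
  · show g (h []) = []
    rw [hh0, hg0]
  · show g (h [x]) = _
    rw [hh1, hg1, add_assoc]
  · show ∃ w', g (h _) = _
    obtain ⟨w1, hw1⟩ := hh2 x y w
    obtain ⟨w2, hw2⟩ := hg2 (x + c') (y + f' x) w1
    exact ⟨w2, by rw [hw1, hw2, add_assoc, add_assoc]⟩

lemma specW_inv {g c f} (hg : SpecW d g c f) :
    SpecW d g⁻¹ (-c) (fun x => -(f (x + -c))) := by
  obtain ⟨hg0, hg1, hg2⟩ := hg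
  refine ⟨?_, fun x => ?_, fun x y w => ?_⟩
  · conv_lhs => rw [← hg0]
    exact Equiv.symm_apply_apply g []
  · have h1 : g [x + -c] = [x] := by rw [hg1, neg_add_cancel_right]
    conv_lhs => rw [← h1]
    exact Equiv.symm_apply_apply g _
  · have hgu : g (g⁻¹ (x :: y :: w)) = x :: y :: w := Equiv.apply_symm_apply g _
    rcases hu : g⁻¹ (x :: y :: w) with _ | ⟨z1, _ | ⟨z2, zw⟩⟩
    · rw [hu, hg0] at hgu; exact absurd hgu (by simp)
    · rw [hu, hg1] at hgu; exact absurd hgu (by simp)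
    · rw [hu] at hgu
      obtain ⟨w2, hw2⟩ := hg2 z1 z2 zw
      rw [hw2] at hgu
      obtain ⟨h1, h2, h3⟩ : z1 + c = x ∧ z2 + f z1 = y ∧ w2 = w := by
        simpa using hgu
      have hz1 : z1 = x + -c := by rw [← h1, add_neg_cancel_right]
      have hz2 : z2 = y + -(f (x + -c)) := by
        rw [← hz1, ← h2, add_neg_cancel_right]
      refine ⟨zw, ?_⟩
      simp only [hz1, hz2]
      try rw [hu]

lemma specW_a : SpecW d (aPerm d) 1 0 := by
  refine ⟨rfl, fun x => rfl, fun x y w => ⟨w, by simp [aPerm, aFun]⟩⟩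

lemma specW_r (hd : 3 ≤ d) :
    SpecW d (rPerm d) 0 (fun x => if x = 0 then 1 else 0) := by
  have hcons : ∀ (y : Fin d) (w : List (Fin d)), ∃ w', rFun d (y :: w) = y :: w' := by
    intro y w
    unfold rFun
    split_ifs <;> exact ⟨_, rfl⟩
  refine ⟨rfl, fun x => ?_, fun x y w => ?_⟩
  · show rFun d [x] = _
    unfold rFun
    split_ifs <;> simp [aFun, rFun]
  · show ∃ w', rFun d (x :: y :: w) = _
    by_cases h0 : x = 0
    · subst h0
      exact ⟨w, by simp [rFun, aFun]⟩
    · by_cases h1 : x = -1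
      · obtain ⟨w', hw'⟩ := hcons y w
        refine ⟨w', ?_⟩
        rw [rFun_cons, if_neg h0, if_pos h1, hw']
        simp [h0]
      · refine ⟨w, ?_⟩
        rw [rFun_cons, if_neg h0, if_neg h1]
        simp [h0]

lemma spec_mem (hd : 3 ≤ d) {g : Equiv.Perm (List (Fin d))} (hg : g ∈ Gamma d) :
    Spec d g := by
  induction hg using Subgroup.closure_induction with
  | mem x hx =>
    rcases hx with h | h
    · exact ⟨_, _, h ▸ specW_a⟩
    · exact ⟨_, _, h ▸ specW_r hd⟩
  | one => exact ⟨_, _, specW_one⟩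
  | mul x y hx hy ihx ihy =>
    obtain ⟨c, f, hx'⟩ := ihx
    obtain ⟨c', f', hy'⟩ := ihy
    exact ⟨_, _, specW_mul hx' hy'⟩
  | inv x hx ihx =>
    obtain ⟨c, f, hx'⟩ := ihx
    exact ⟨_, _, specW_inv hx'⟩


variable (d)

lemma aFun_cons (x : Fin d) (w : List (Fin d)) : aFun d (x :: w) = (x + 1) :: w := rfl

lemma aFun_iter (n : ℕ) (x : Fin d) (w : List (Fin d)) :
    (aFun d)^[n] (x :: w) = (x + (n : Fin d)) :: w := by
  induction n with
  | zero => simp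
  | succ n ih =>
      rw [Function.iterate_succ_apply', ih, aFun_cons, Nat.cast_succ, add_assoc]

lemma aFun_iter_d (w : List (Fin d)) : (aFun d)^[d] w = w := by
  cases w with
  | nil => exact Function.iterate_fixed rfl d
  | cons x w => rw [aFun_iter, Fin.natCast_self, add_zero]

lemma aPerm_pow_d : aPerm d ^ d = 1 := by
  refine Equiv.ext fun w => ?_
  show (⇑(aPerm d))^[d] w = w
  exact aFun_iter_d d w

lemma rFun_iter_zero (n : ℕ) (w : List (Fin d)) :
    (rFun d)^[n] ((0 : Fin d) :: w) = 0 :: (aFun d)^[n] w := by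
  induction n with
  | zero => simp
  | succ n ih =>
      rw [Function.iterate_succ_apply', ih, rFun_cons, if_pos rfl,
        Function.iterate_succ_apply']

lemma rFun_iter_neg (hne : (-1 : Fin d) ≠ 0) (n : ℕ) (w : List (Fin d)) :
    (rFun d)^[n] ((-1 : Fin d) :: w) = -1 :: (rFun d)^[n] w := by
  induction n with
  | zero => simp
  | succ n ih =>
      rw [Function.iterate_succ_apply', ih, rFun_cons, if_neg hne, if_pos rfl,
        Function.iterate_succ_apply']

lemma neg_one_ne_zero' (hd : 3 ≤ d) : (-1 : Fin d) ≠ 0 := by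
  have h1 : (1 : Fin d).val = 1 := by
    rw [Fin.val_one']
    exact Nat.mod_eq_of_lt (by omega)
  intro h
  have h2 : (1 : Fin d) = 0 := by rwa [neg_eq_zero] at h
  rw [h2] at h1
  simp at h1

lemma rFun_iter_d (hd : 3 ≤ d) (w : List (Fin d)) : (rFun d)^[d] w = w := by
  induction w with
  | nil => exact Function.iterate_fixed rfl d
  | cons x w ih =>
      by_cases h0 : x = 0
      · subst h0; rw [rFun_iter_zero, aFun_iter_d]
      · by_cases h1 : x = -1
        · subst h1; rw [rFun_iter_neg d (neg_one_ne_zero' d hd), ih]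
        · exact Function.iterate_fixed (by rw [rFun_cons, if_neg h0, if_neg h1]) d

lemma rPerm_pow_d (hd : 3 ≤ d) : rPerm d ^ d = 1 := by
  refine Equiv.ext fun w => ?_
  show (⇑(rPerm d))^[d] w = w
  exact rFun_iter_d d hd w

lemma aG_pow_d : aG d ^ d = 1 := by
  apply Subtype.ext
  show ((aG d : Equiv.Perm (List (Fin d))) ^ d) = 1
  exact aPerm_pow_d d

lemma rG_pow_d (hd : 3 ≤ d) : rG d ^ d = 1 := by
  apply Subtype.ext
  show ((rG d : Equiv.Perm (List (Fin d))) ^ d) = 1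
  exact rPerm_pow_d d hd

/-- The abelianization invariant `Γ_d → ZMod d × ZMod d`. -/
def Phi (hd : 3 ≤ d) : ↥(Gamma d) →* Multiplicative (ZMod d × ZMod d) :=
  MonoidHom.mk' (fun g => Multiplicative.ofAdd (cEval d ↑g, sEval d ↑g)) (by
    intro g h
    obtain ⟨c, f, hg⟩ := spec_mem hd g.2
    obtain ⟨c', f', hh⟩ := spec_mem hd h.2
    have hmul := specW_mul hg hh
    have hco : ((g * h : ↥(Gamma d)) : Equiv.Perm (List (Fin d)))
        = (g : Equiv.Perm (List (Fin d))) * (h : Equiv.Perm (List (Fin d))) := rfl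
    rw [← ofAdd_add]
    congr 1
    refine Prod.ext ?_ ?_
    · show cEval d ↑(g * h) = cEval d ↑g + cEval d ↑h
      rw [hco, cEval_specW hmul, cEval_specW hg, cEval_specW hh, map_add, add_comm]
    · show sEval d ↑(g * h) = sEval d ↑g + sEval d ↑h
      rw [hco, sEval_specW hmul, sEval_specW hg, sEval_specW hh]
      calc ∑ x : Fin d, em d (f' x + f (x + c'))
          = ∑ x : Fin d, (em d (f' x) + em d (f (x + c'))) := by simp [map_add]
        _ = ∑ x : Fin d, em d (f' x) + ∑ x : Fin d, em d (f (x + c')) :=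
            Finset.sum_add_distrib
        _ = ∑ x : Fin d, em d (f' x) + ∑ x : Fin d, em d (f x) := by
            rw [Fintype.sum_equiv (Equiv.addRight c')
              (fun x => em d (f (x + c'))) (fun x => em d (f x)) (fun x => rfl)]
        _ = _ := add_comm _ _)

lemma Phi_a (hd : 3 ≤ d) : Phi d hd (aG d) = Multiplicative.ofAdd ((1 : ZMod d), 0) := by
  have h1 : cEval d (aPerm d) = em d 1 := cEval_specW specW_a
  have h2 : sEval d (aPerm d) = ∑ _x : Fin d, em d 0 := sEval_specW specW_a
  show Multiplicative.ofAdd (cEval d (aPerm d), sEval d (aPerm d)) = _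
  rw [h1, h2, em_one]
  simp

lemma Phi_r (hd : 3 ≤ d) : Phi d hd (rG d) = Multiplicative.ofAdd ((0 : ZMod d), 1) := by
  have h1 : cEval d (rPerm d) = em d 0 := cEval_specW (specW_r hd)
  have h2 : sEval d (rPerm d)
      = ∑ x : Fin d, em d (if x = 0 then 1 else 0) := sEval_specW (specW_r hd)
  show Multiplicative.ofAdd (cEval d (rPerm d), sEval d (rPerm d)) = _
  rw [h1, h2]
  simp [apply_ite (em d), em_one]


section Assembly

lemma of_aG_pow : Abelianization.of (aG d) ^ d = 1 := by
  rw [← map_pow, aG_pow_d, map_one]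

lemma of_rG_pow (hd : 3 ≤ d) : Abelianization.of (rG d) ^ d = 1 := by
  rw [← map_pow, rG_pow_d d hd, map_one]

/-- The additive hom `ZMod d →+ Additive A` sending `1` to an element of order dividing `d`. -/
def liftZMod {A : Type*} [CommGroup A] (x : A) (hx : x ^ d = 1) :
    ZMod d →+ Additive A :=
  ZMod.lift d ⟨zmultiplesHom (Additive A) (Additive.ofMul x), by
    show ((d : ℤ) • Additive.ofMul x) = 0
    rw [← ofMul_zpow, zpow_natCast, hx, ofMul_one]⟩

lemma liftZMod_coe {A : Type*} [CommGroup A] (x : A) (hx : x ^ d = 1) (z : ℤ) :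
    liftZMod d x hx ((z : ℤ) : ZMod d) = z • Additive.ofMul x :=
  ZMod.lift_coe d _ z

lemma liftZMod_one {A : Type*} [CommGroup A] (x : A) (hx : x ^ d = 1) :
    liftZMod d x hx 1 = Additive.ofMul x := by
  have := liftZMod_coe d x hx 1
  simpa using this

/-- The inverse homomorphism `Multiplicative (ZMod d × ZMod d) →* Γ_d^{ab}`. -/
def psi (hd : 3 ≤ d) : Multiplicative (ZMod d × ZMod d) →* Abelianization ↥(Gamma d) :=
  AddMonoidHom.toMultiplicativeLeft
    ((liftZMod d (Abelianization.of (aG d)) (of_aG_pow d)).comp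
        (AddMonoidHom.fst (ZMod d) (ZMod d)) +
      (liftZMod d (Abelianization.of (rG d)) (of_rG_pow d hd)).comp
        (AddMonoidHom.snd (ZMod d) (ZMod d)))

lemma psi_ofAdd (hd : 3 ≤ d) (p : ZMod d × ZMod d) :
    psi d hd (Multiplicative.ofAdd p)
      = Additive.toMul (liftZMod d (Abelianization.of (aG d)) (of_aG_pow d) p.1
          + liftZMod d (Abelianization.of (rG d)) (of_rG_pow d hd) p.2) := rfl

lemma psi_a (hd : 3 ≤ d) :
    psi d hd (Multiplicative.ofAdd ((1 : ZMod d), 0)) = Abelianization.of (aG d) := by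
  rw [psi_ofAdd]
  simp [liftZMod_one]

lemma psi_r (hd : 3 ≤ d) :
    psi d hd (Multiplicative.ofAdd ((0 : ZMod d), 1)) = Abelianization.of (rG d) := by
  rw [psi_ofAdd]
  simp [liftZMod_one]

lemma psi_phi (hd : 3 ≤ d) (g : ↥(Gamma d)) :
    psi d hd (Phi d hd g) = Abelianization.of g := by
  obtain ⟨x, hx⟩ := g
  induction hx using Subgroup.closure_induction with
  | mem y hy =>
      rcases hy with h | h
      · subst h
        show psi d hd (Phi d hd (aG d)) = Abelianization.of (aG d)
        rw [Phi_a d hd, psi_a d hd]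
      · subst h
        show psi d hd (Phi d hd (rG d)) = Abelianization.of (rG d)
        rw [Phi_r d hd, psi_r d hd]
  | one =>
      show psi d hd (Phi d hd 1) = Abelianization.of 1
      rw [map_one, map_one, map_one]
  | mul y z hy hz ihy ihz =>
      show psi d hd (Phi d hd ((⟨y, hy⟩ : ↥(Gamma d)) * ⟨z, hz⟩))
        = Abelianization.of ((⟨y, hy⟩ : ↥(Gamma d)) * ⟨z, hz⟩)
      rw [map_mul, map_mul, map_mul, ihy, ihz]
  | inv y hy ihy =>
      show psi d hd (Phi d hd (⟨y, hy⟩ : ↥(Gamma d))⁻¹)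
        = Abelianization.of (⟨y, hy⟩ : ↥(Gamma d))⁻¹
      rw [map_inv, map_inv, map_inv, ihy]

lemma lift_surj (hd : 3 ≤ d) :
    Function.Surjective (Abelianization.lift (Phi d hd)) := by
  intro z
  refine ⟨Abelianization.of
    (aG d ^ (Multiplicative.toAdd z).1.val * rG d ^ (Multiplicative.toAdd z).2.val), ?_⟩
  rw [Abelianization.lift_apply_of, map_mul, map_pow, map_pow, Phi_a d hd, Phi_r d hd,
    ← ofAdd_nsmul, ← ofAdd_nsmul, ← ofAdd_add]
  have h1 := ZMod.natCast_rightInverse (n := d) (Multiplicative.toAdd z).1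
  have h2 := ZMod.natCast_rightInverse (n := d) (Multiplicative.toAdd z).2
  have hp : (Multiplicative.toAdd z).1.val • ((1 : ZMod d), (0 : ZMod d))
      + (Multiplicative.toAdd z).2.val • ((0 : ZMod d), (1 : ZMod d))
      = Multiplicative.toAdd z := by
    apply Prod.ext
    · simpa [nsmul_eq_mul] using h1
    · simpa [nsmul_eq_mul] using h2
  rw [hp]
  exact ofAdd_toAdd z

end Assembly

end FGX




/-- For every `d ≥ 3`, the abelianization `Γ_d/Γ_d'` of the Fabrykowski–Gupta group is
isomorphic to `ℤ_d × ℤ_d`. -/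
theorem stmt_0 (d : ℕ) [NeZero d] (hd : 3 ≤ d) :
    Nonempty (Abelianization ↥(FG.Gamma d) ≃* Multiplicative (ZMod d × ZMod d)) := by
  classical
  have hinvall : ∀ u, FGX.psi d hd (Abelianization.lift (FGX.Phi d hd) u) = u := by
    have h := Abelianization.hom_ext
      ((FGX.psi d hd).comp (Abelianization.lift (FGX.Phi d hd)))
      (MonoidHom.id (Abelianization ↥(FG.Gamma d))) ?_
    · intro u
      exact DFunLike.congr_fun h u
    · ext g
      show FGX.psi d hd (Abelianization.lift (FGX.Phi d hd) (Abelianization.of g))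
        = Abelianization.of g
      rw [Abelianization.lift_apply_of]
      exact FGX.psi_phi d hd g
  have hinj : Function.Injective (Abelianization.lift (FGX.Phi d hd)) := by
    intro u v h
    rw [← hinvall u, h, hinvall v]
  exact ⟨MulEquiv.ofBijective (Abelianization.lift (FGX.Phi d hd)) ⟨hinj, FGX.lift_surj d hd⟩⟩
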